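/- Let p > 1 and a > 0, B > 0, C ∈ ℝ, and t(ε) = ((ε² + a)/(B ε^{2p} + 2C ε^p + a))^{1/(2p−2)}. If 1 < p < 2 and C > 0, then for all sufficiently small ε > 0 one has (1 − t(ε)²) a − t(ε)² ε² > 0; in fact (1 − t(ε)²)a − t(ε)²ε² = (2/(p−1)) C ε^p + o(ε^p) as ε → 0⁺. -/

import Mathlib

open Topology Filter Asymptotics

/-- For `1 < p < 2` and `C > 0`, the energy comparison quantity
`(1 − t(ε)²)a − t(ε)²ε²` equals `(2/(p−1))Cε^p + o(ε^p)` as `ε → 0⁺`, and in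
particular it is positive for all small `ε > 0`. -/
theorem stmt9 (p : ℝ) (hp1 : 1 < p) (hp2 : p < 2) (a B C : ℝ)
    (ha : 0 < a) (hB : 0 < B) (hC : 0 < C)
    (t : ℝ → ℝ)
    (ht : ∀ ε : ℝ, t ε =
      ((ε ^ 2 + a) / (B * ε ^ (2*p) + 2 * C * ε ^ p + a)) ^ (1/(2*p - 2))) :
    (∀ᶠ ε in 𝓝[>] (0:ℝ), 0 < (1 - t ε ^ 2) * a - t ε ^ 2 * ε ^ 2) ∧
    (fun ε => (1 - t ε ^ 2) * a - t ε ^ 2 * ε ^ 2 - (2/(p - 1)) * C * ε ^ p)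
      =o[𝓝[>] (0:ℝ)] fun ε => ε ^ p := by
  have hp1' : (0:ℝ) < p - 1 := by linarith
  obtain ⟨q, hqdef⟩ : ∃ q : ℝ, q = 1/(p-1) := ⟨_, rfl⟩
  have hq : 0 < q := by rw [hqdef]; positivity
  obtain ⟨N, hN⟩ : ∃ N : ℝ → ℝ, N = fun ε : ℝ => ε^2 + a := ⟨_, rfl⟩
  obtain ⟨D, hD⟩ : ∃ D : ℝ → ℝ, D = fun ε : ℝ => B*ε^(2*p) + 2*C*ε^p + a := ⟨_, rfl⟩
  obtain ⟨w, hw⟩ : ∃ w : ℝ → ℝ, w = fun ε : ℝ => (N ε - D ε)/D ε := ⟨_, rfl⟩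
  obtain ⟨f, hf⟩ : ∃ f : ℝ → ℝ,
    f = fun ε : ℝ => (1 - t ε ^ 2) * a - t ε ^ 2 * ε ^ 2 := ⟨_, rfl⟩
  set l : Filter ℝ := 𝓝[>] (0:ℝ) with hl
  have hεpos : ∀ᶠ ε in l, (0:ℝ) < ε := self_mem_nhdsWithin
  -- tendsto of power functions
  have tpow : ∀ r : ℝ, 0 < r → Tendsto (fun ε : ℝ => ε ^ r) l (𝓝 0) := by
    intro r hr
    have h := (Real.continuousAt_rpow_const 0 r (Or.inr hr.le)).tendsto
    rw [Real.zero_rpow hr.ne'] at h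
    exact h.mono_left nhdsWithin_le_nhds
  have tN : Tendsto N l (𝓝 a) := by
    rw [hN]
    have h : Tendsto (fun ε : ℝ => ε^2 + a) (𝓝 0) (𝓝 ((0:ℝ)^2 + a)) :=
      Continuous.tendsto (by continuity) 0
    norm_num at h
    exact h.mono_left nhdsWithin_le_nhds
  have tD : Tendsto D l (𝓝 a) := by
    rw [hD]
    have h := (((tpow (2*p) (by linarith)).const_mul B).add
      ((tpow p (by linarith)).const_mul (2*C))).add_const a
    simpa using h
  have tw : Tendsto w l (𝓝 0) := by
    rw [hw]
    have h := (tN.sub tD).div tD ha.ne'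
    rw [sub_self, zero_div] at h
    exact h
  -- eventually D > 0
  have hDpos : ∀ᶠ ε in l, 0 < D ε := by
    filter_upwards [hεpos] with ε hε
    have h1 : 0 < ε ^ (2*p) := Real.rpow_pos_of_pos hε _
    have h2 : 0 < ε ^ p := Real.rpow_pos_of_pos hε _
    rw [hD]
    positivity
  -- eventually w < 0
  have hwneg : ∀ᶠ ε in l, w ε < 0 := by
    filter_upwards [hεpos, hDpos,
      (tpow (2-p) (by linarith)).eventually_lt_const (by linarith : (0:ℝ) < 2*C)]
      with ε hε hDε hsm
    have h2 : 0 < ε ^ p := Real.rpow_pos_of_pos hε _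
    have h1 : 0 < ε ^ (2*p) := Real.rpow_pos_of_pos hε _
    have hsplit : ε ^ (2:ℕ) = ε ^ (2-p) * ε ^ p := by
      rw [← Real.rpow_natCast ε 2, ← Real.rpow_add hε]
      norm_num
    have hnum : N ε - D ε < 0 := by
      have hlt : ε ^ (2-p) * ε ^ p < (2*C) * ε ^ p :=
        mul_lt_mul_of_pos_right hsm h2
      rw [hN, hD]
      simp only
      rw [hsplit]
      nlinarith
    rw [hw]
    exact div_neg_of_neg_of_pos hnum hDε
  -- slope limit
  have hslope : Tendsto (fun ε => ((1 + w ε)^q - 1)/(w ε)) l (𝓝 q) := by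
    have h0 : HasDerivAt (fun v : ℝ => 1 + v) 1 0 := by
      simpa using (hasDerivAt_id (0:ℝ)).const_add 1
    have hd : HasDerivAt (fun v : ℝ => (1+v)^q) q 0 := by
      have h := h0.rpow_const (p := q) (Or.inl (by norm_num))
      simpa using h
    have hs := hasDerivAt_iff_tendsto_slope.1 hd
    have hwt : Tendsto w l (𝓝[≠] (0:ℝ)) := by
      rw [tendsto_nhdsWithin_iff]
      refine ⟨tw, ?_⟩
      filter_upwards [hwneg] with ε hε
      exact hε.ne
    have hcomp := hs.comp hwt
    refine hcomp.congr fun ε => ?_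
    simp [slope_def_field, Function.comp]
  -- the auxiliary function limit
  have tg : Tendsto (fun ε : ℝ =>
      -ε^(2-p) - N ε * (((1 + w ε)^q - 1)/(w ε)) * ((ε^(2-p) - B*ε^p - 2*C)/(D ε)))
      l (𝓝 (2/(p-1)*C)) := by
    have hdiv : Tendsto (fun x : ℝ => (x^(2-p) - B*x^p - 2*C)/(D x)) l
        (𝓝 ((0 - B*0 - 2*C)/a)) :=
      Tendsto.div (((tpow (2-p) (by linarith)).sub
        ((tpow p (by linarith)).const_mul B)).sub_const (2*C)) tD ha.ne'
    have h := ((tpow (2-p) (by linarith)).neg).sub ((tN.mul hslope).mul hdiv)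
    have hval : -(0:ℝ) - a * q * ((0 - B*0 - 2*C)/a) = 2/(p-1)*C := by
      rw [hqdef]; field_simp; ring
    rw [hval] at h
    exact h
  -- eventual equality  f ε / ε^p = g ε
  have heq : ∀ᶠ ε in l, f ε / ε^p =
      -ε^(2-p) - N ε * (((1 + w ε)^q - 1)/(w ε)) * ((ε^(2-p) - B*ε^p - 2*C)/(D ε)) := by
    filter_upwards [hεpos, hDpos, hwneg] with ε hε hDε hwε
    have hNε : 0 < N ε := by rw [hN]; positivity
    have hεp : 0 < ε ^ p := Real.rpow_pos_of_pos hε _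
    have hsplit : ε ^ (2:ℕ) = ε ^ (2-p) * ε ^ p := by
      rw [← Real.rpow_natCast ε 2, ← Real.rpow_add hε]
      norm_num
    have h2p : ε ^ (2*p) = ε ^ p * ε ^ p := by
      rw [← Real.rpow_add hε]; ring_nf
    -- t ε ^ 2 = (N ε / D ε) ^ q
    have ht2 : t ε ^ 2 = (N ε / D ε) ^ q := by
      have hexp : 1/(2*p-2) * ((2:ℕ):ℝ) = q := by
        have hne1 : (2*p-2) ≠ 0 := ne_of_gt (by linarith)
        push_cast
        rw [hqdef, div_mul_eq_mul_div, one_mul, div_eq_div_iff hne1 hp1'.ne']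
        ring
      have hbase : (ε^2 + a)/(B*ε^(2*p) + 2*C*ε^p + a) = N ε / D ε := by
        rw [hN, hD]
      rw [ht ε, hbase, ← Real.rpow_natCast _ 2,
        ← Real.rpow_mul (le_of_lt (div_pos hNε hDε)), hexp]
    have h1w : (1:ℝ) + w ε = N ε / D ε := by
      rw [hw]
      field_simp
      ring
    -- f ε = a - (1 + w ε)^q * N ε
    have hfe : f ε = a - (1 + w ε)^q * N ε := by
      rw [hf]
      simp only
      rw [ht2, h1w, hN]
      simp only
      ring
    -- w ε * D ε = ε^p * (ε^(2-p) - B*ε^p - 2*C)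
    have hwD : w ε * D ε = ε^p * (ε^(2-p) - B*ε^p - 2*C) := by
      have h1 : w ε * D ε = N ε - D ε := by
        rw [hw]; field_simp
      rw [h1, hN, hD]
      simp only
      rw [hsplit, h2p]
      ring
    have hwne : w ε ≠ 0 := hwε.ne
    have hS : ε^(2-p) - B*ε^p - 2*C < 0 := by
      have h1 : ε^p * (ε^(2-p) - B*ε^p - 2*C) < 0 := by
        rw [← hwD]; exact mul_neg_of_neg_of_pos hwε hDε
      nlinarith [hεp]
    have key2 : N ε * (((1 + w ε)^q - 1)/(w ε)) * ((ε^(2-p) - B*ε^p - 2*C)/(D ε))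
        = N ε * ((1 + w ε)^q - 1) / ε^p := by
      have hSw : (ε^(2-p) - B*ε^p - 2*C)/(D ε) = w ε / ε^p := by
        rw [div_eq_div_iff hDε.ne' hεp.ne']
        linear_combination -hwD
      rw [hSw]
      field_simp
    rw [hfe, key2, div_eq_iff hεp.ne', hN]
    simp only
    field_simp
    linear_combination -hsplit
  have key : Tendsto (fun ε => f ε / ε^p) l (𝓝 (2/(p-1)*C)) :=
    Tendsto.congr' (by filter_upwards [heq] with ε h using h.symm) tg
  have hLpos : 0 < 2/(p-1)*C := by positivity
  constructor
  · filter_upwards [hεpos, key.eventually_const_lt hLpos] with ε hε hgt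
    have hεp : 0 < ε ^ p := Real.rpow_pos_of_pos hε _
    have h1 : 0 < f ε / ε ^ p * ε ^ p := mul_pos hgt hεp
    rw [div_mul_cancel₀ _ hεp.ne'] at h1
    rw [hf] at h1
    exact h1
  · rw [isLittleO_iff_tendsto']
    · have h := key.sub_const (2/(p-1)*C)
      rw [sub_self] at h
      refine Tendsto.congr' ?_ h
      filter_upwards [hεpos] with ε hε
      have hεp : 0 < ε ^ p := Real.rpow_pos_of_pos hε _
      rw [hf]
      simp only
      field_simp
    · filter_upwards [hεpos] with ε hε h0
      exact absurd h0 (Real.rpow_pos_of_pos hε _).ne'
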